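/- Let $a, b, c$ be pairwise distinct complex numbers in the closed upper half unit disk and set $k = \frac{c-b}{a-b}$. Then $\left|\frac{1-bc}{1-ba}\right| \le 5(1 + |k|)$, provided $1 - ba \ne 0$. -/

import Mathlib

set_option maxHeartbeats 800000

lemma step_poly (x y p q : ℝ) (hy : 0 ≤ y) (hq : 0 ≤ q)
    (hb : x^2 + y^2 ≤ 1) (hpos : 0 < x*p - y*q) :
    y^2 * ((x^2+y^2)*(p^2+q^2)) ≤ (x*q+y*p)^2 := by
  have hy1 : y^2 ≤ 1 := by nlinarith
  have h1 : (x*p - y*q)^2 ≤ (x*p)^2 := by nlinarith [mul_nonneg hy hq]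
  have h2 : (x*p)^2 ≤ (1-y^2)*((x^2+y^2)*(p^2+q^2)) := by
    nlinarith [mul_nonneg (sq_nonneg (x*q)) (sub_nonneg.mpr hy1),
      mul_nonneg (sq_nonneg (y*p)) (sub_nonneg.mpr hb),
      mul_nonneg (sq_nonneg (y*q)) (sub_nonneg.mpr hy1)]
  nlinarith [h1, h2]

lemma main_poly (x y p q : ℝ) (hy : 0 ≤ y) (hq : 0 ≤ q)
    (hb : x^2 + y^2 ≤ 1) (ha : p^2 + q^2 ≤ 1) :
    (1-(x^2-y^2))^2 + (2*x*y)^2 ≤ 8*((1-(x*p-y*q))^2 + (x*q+y*p)^2) := by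
  rcases le_or_gt (x*p - y*q) 0 with hneg | hpos
  · nlinarith [sq_nonneg (x*q+y*p), sq_nonneg (x*p-y*q), sq_nonneg (x*y),
      sq_nonneg (x^2-y^2), sq_nonneg (x^2+y^2-1)]
  · have hB := step_poly x y p q hy hq hb hpos
    have hI : (x*q+y*p)^2 ≤ ((1-(x*p-y*q))^2 + (x*q+y*p)^2) * ((x*p-y*q)^2 + (x*q+y*p)^2) := by
      nlinarith [sq_nonneg ((x*p-y*q) - ((x*p-y*q)^2 + (x*q+y*p)^2))]
    have hlag : (x*p-y*q)^2 + (x*q+y*p)^2 = (x^2+y^2)*(p^2+q^2) := by ring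
    have hspos : 0 < (x^2+y^2)*(p^2+q^2) := by nlinarith [sq_nonneg (x*q+y*p)]
    have hBd : y^2 ≤ (1-(x*p-y*q))^2 + (x*q+y*p)^2 := by
      rw [hlag] at hI
      exact le_of_mul_le_mul_right (hB.trans hI) hspos
    have hp1 : p ≤ 1 := by nlinarith
    have hp1' : -1 ≤ p := by nlinarith
    have hyq : 0 ≤ y*q := mul_nonneg hy hq
    rcases le_or_gt 0 x with hx | hx
    · have hA0 : 1 - x ≤ 1 - (x*p - y*q) := by
        have := mul_le_mul_of_nonneg_left hp1 hx
        linarith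
      have hx1 : x ≤ 1 := by nlinarith
      have hAd : (1-x)^2 ≤ (1-(x*p-y*q))^2 + (x*q+y*p)^2 := by
        have h1 : (1-x)^2 ≤ (1 - (x*p - y*q))^2 := sq_le_sq' (by linarith) hA0
        have h2 := sq_nonneg (x*q+y*p)
        linarith
      have hmul : (1-x)^2*(1+x)^2 ≤ 4*(1-x)^2 := by
        have h4 : (1+x)^2 ≤ 4 := by nlinarith
        nlinarith [sq_nonneg (1-x)]
      have hy2 : y^2*(2+2*x^2+y^2) ≤ 4*y^2 := by
        have h4 : 2+2*x^2+y^2 ≤ 4 := by nlinarith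
        nlinarith [sq_nonneg y]
      nlinarith [hmul, hy2, hAd, hBd]
    · have hA0 : 1 + x ≤ 1 - (x*p - y*q) := by
        nlinarith [mul_le_mul_of_nonneg_right hp1' (le_of_lt (neg_pos.mpr hx))]
      have hx1 : -1 ≤ x := by nlinarith
      have hAd : (1+x)^2 ≤ (1-(x*p-y*q))^2 + (x*q+y*p)^2 := by
        have h1 : (1+x)^2 ≤ (1 - (x*p - y*q))^2 := sq_le_sq' (by linarith) hA0
        have h2 := sq_nonneg (x*q+y*p)
        linarith
      have hmul : (1+x)^2*(1-x)^2 ≤ 4*(1+x)^2 := by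
        have h4 : (1-x)^2 ≤ 4 := by nlinarith
        nlinarith [sq_nonneg (1+x)]
      have hy2 : y^2*(2+2*x^2+y^2) ≤ 4*y^2 := by
        have h4 : 2+2*x^2+y^2 ≤ 4 := by nlinarith
        nlinarith [sq_nonneg y]
      nlinarith [hmul, hy2, hAd, hBd]

open Complex

lemma L1 (a b : ℂ) (ha : ‖a‖ ≤ 1) (ha' : 0 ≤ a.im)
    (hb : ‖b‖ ≤ 1) (hb' : 0 ≤ b.im) :
    ‖1 - b^2‖ ≤ Real.sqrt 8 * ‖1 - b*a‖ := by
  have hb2 : b.re^2 + b.im^2 ≤ 1 := by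
    have h := Complex.sq_norm b
    rw [Complex.normSq_apply] at h
    nlinarith [norm_nonneg b]
  have ha2 : a.re^2 + a.im^2 ≤ 1 := by
    have h := Complex.sq_norm a
    rw [Complex.normSq_apply] at h
    nlinarith [norm_nonneg a]
  have e1 : Complex.normSq (1 - b*a)
      = (1-(b.re*a.re - b.im*a.im))^2 + (b.re*a.im+b.im*a.re)^2 := by
    simp [Complex.normSq_apply, Complex.mul_re, Complex.mul_im]; ring
  have e2 : Complex.normSq (1 - b^2)
      = (1-(b.re^2-b.im^2))^2 + (2*b.re*b.im)^2 := by
    simp [Complex.normSq_apply, Complex.mul_re, Complex.mul_im, pow_two]; ring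
  have hs : Complex.normSq (1 - b^2) ≤ 8 * Complex.normSq (1 - b*a) := by
    rw [e1, e2]
    exact main_poly b.re b.im a.re a.im hb' ha' hb2 ha2
  calc ‖1 - b^2‖ = Real.sqrt (Complex.normSq (1 - b^2)) := Complex.norm_def _
    _ ≤ Real.sqrt (8 * Complex.normSq (1 - b*a)) := Real.sqrt_le_sqrt hs
    _ = Real.sqrt 8 * ‖1 - b*a‖ := by
        rw [Real.sqrt_mul (by norm_num : (0:ℝ) ≤ 8), Complex.norm_def]

theorem stmt_5 (a b c : ℂ)
    (ha : ‖a‖ ≤ 1) (ha' : 0 ≤ a.im)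
    (hb : ‖b‖ ≤ 1) (hb' : 0 ≤ b.im)
    (hc : ‖c‖ ≤ 1) (hc' : 0 ≤ c.im)
    (hab : a ≠ b) (hbc : b ≠ c) (hac : a ≠ c)
    (hden : 1 - b * a ≠ 0) :
    ‖(1 - b * c) / (1 - b * a)‖
      ≤ 5 * (1 + ‖(c - b) / (a - b)‖) := by
  have hab' : a - b ≠ 0 := sub_ne_zero.mpr hab
  set k : ℂ := (c - b) / (a - b) with hk
  have key : (1 - b * c) / (1 - b * a) = k + (1 - k) * ((1 - b^2) / (1 - b*a)) := by
    rw [hk]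
    field_simp
    ring
  have hq : ‖(1 - b^2) / (1 - b*a)‖ ≤ Real.sqrt 8 := by
    rw [norm_div]
    rw [div_le_iff₀ (norm_pos_iff.mpr hden)]
    exact L1 a b ha ha' hb hb'
  have h8 : Real.sqrt 8 ≤ 3 := by
    nlinarith [Real.sq_sqrt (show (0:ℝ) ≤ 8 by norm_num), Real.sqrt_nonneg 8]
  have hkn : 0 ≤ ‖k‖ := norm_nonneg k
  calc ‖(1 - b * c) / (1 - b * a)‖
      = ‖k + (1 - k) * ((1 - b^2) / (1 - b*a))‖ := by rw [key]
    _ ≤ ‖k‖ + ‖1 - k‖ * ‖(1 - b^2) / (1 - b*a)‖ := by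
        refine (norm_add_le _ _).trans ?_
        rw [norm_mul]
    _ ≤ ‖k‖ + (1 + ‖k‖) * Real.sqrt 8 := by
        have h1k : ‖1 - k‖ ≤ 1 + ‖k‖ := by
          calc ‖1 - k‖ ≤ ‖(1:ℂ)‖ + ‖-k‖ := by
                rw [sub_eq_add_neg]; exact norm_add_le _ _
            _ = 1 + ‖k‖ := by simp
        have := mul_le_mul h1k hq (norm_nonneg _) (by positivity)
        linarith
    _ ≤ 5 * (1 + ‖k‖) := by nlinarith [Real.sqrt_nonneg 8]
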